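/- For n ≥ 1, the number of plane trees with n edges and k young leaves equals the number of Dyck paths of length 2n with exactly k peaks at even height. -/

import Mathlib

/-- A plane tree: a root together with an ordered (possibly empty) list of subtrees. -/
inductive PlaneTree where
  | node : List PlaneTree → PlaneTree

namespace PlaneTree

/-- The number of edges of a plane tree. -/
def edges : PlaneTree → ℕ
  | node ts => (ts.attach.map (fun t => edges t.1 + 1)).sum
decreasing_by have := List.sizeOf_lt_of_mem t.2; simp at *; omega

/-- Indicator that a tree is a single vertex (i.e. the corresponding child is a leaf). -/
def isLeafInd : PlaneTree → ℕ
  | node [] => 1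
  | node (_ :: _) => 0

/-- The number of old leaves: leaves that are the leftmost child of their parent. -/
def oldLeaves : PlaneTree → ℕ
  | node [] => 0
  | node (t :: ts) =>
      isLeafInd t + oldLeaves t + (ts.attach.map (fun s => oldLeaves s.1)).sum
decreasing_by
  · simp; omega
  · have := List.sizeOf_lt_of_mem s.2; simp at *; omega

/-- The number of young leaves: leaves that are not the leftmost child of their parent. -/
def youngLeaves : PlaneTree → ℕ
  | node [] => 0
  | node (t :: ts) =>
      youngLeaves t + (ts.attach.map (fun s => isLeafInd s.1 + youngLeaves s.1)).sum
decreasing_by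
  · simp; omega
  · have := List.sizeOf_lt_of_mem s.2; simp at *; omega

end PlaneTree

/-- Steps of a Dyck path. -/
inductive StepUD where
  | up : StepUD
  | down : StepUD
deriving DecidableEq

/-- The height change of a step. -/
def StepUD.h : StepUD → ℤ
  | .up => 1
  | .down => -1

/-- A list of steps is a Dyck path if it ends at height 0 and no prefix goes below
the x-axis. -/
def IsDyck (p : List StepUD) : Prop :=
  (p.map StepUD.h).sum = 0 ∧ ∀ q : List StepUD, q <+: p → 0 ≤ (q.map StepUD.h).sum

/-- The number of peaks (occurrences of `UD`) of `p` at even height, the height of a peak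
being the height of the vertex between its two steps. -/
def evenPeaks (p : List StepUD) : ℕ :=
  ((Finset.range p.length).filter (fun i =>
    p.getD i .down = .up ∧ p.getD (i + 1) .up = .down ∧
      ((p.take (i + 1)).map StepUD.h).sum % 2 = 0)).card

/-- The number of occurrences of the factor `DUD` in `p`. -/
def dudCount (p : List StepUD) : ℕ :=
  ((Finset.range p.length).filter (fun i =>
    p.getD i .up = .down ∧ p.getD (i + 1) .down = .up ∧ p.getD (i + 2) .up = .down)).card

namespace PlaneTree

def youngStar : PlaneTree → ℕ
  | node ts => (ts.attach.map (fun s => isLeafInd s.1 + youngLeaves s.1)).sum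

theorem rec' (P : PlaneTree → Prop) (h1 : P (node []))
    (h2 : ∀ t ts, P t → P (node ts) → P (node (t :: ts))) : ∀ T, P T := by
  intro T
  have : ∀ m (T : PlaneTree), sizeOf T ≤ m → P T := by
    intro m
    induction m with
    | zero => intro T hT; cases T with | node ts => simp at hT
    | succ m ih =>
      intro T hT
      cases T with
      | node ts =>
        cases ts with
        | nil => exact h1
        | cons t ts =>
          simp at hT
          exact h2 t ts (ih t (by omega)) (ih (node ts) (by simp; omega))
  exact this (sizeOf T) T le_rfl

@[simp] theorem edges_nil : edges (node []) = 0 := by simp [edges]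
theorem edges_cons (t : PlaneTree) (ts : List PlaneTree) :
    edges (node (t :: ts)) = edges t + 1 + edges (node ts) := by
  rw [edges, edges]
  simp [List.attach_cons]

@[simp] theorem young_nil : youngLeaves (node []) = 0 := by simp [youngLeaves]
@[simp] theorem youngStar_nil : youngStar (node []) = 0 := by simp [youngStar]
theorem young_cons (t : PlaneTree) (ts : List PlaneTree) :
    youngLeaves (node (t :: ts)) = youngLeaves t + youngStar (node ts) := by
  rw [youngLeaves, youngStar]

theorem youngStar_cons (t : PlaneTree) (ts : List PlaneTree) :
    youngStar (node (t :: ts)) = isLeafInd t + youngLeaves t + youngStar (node ts) := by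
  rw [youngStar, youngStar]
  simp [List.attach_cons]

end PlaneTree
/-- hsum: total height change of a list of steps. -/
def hsum (p : List StepUD) : ℤ := (p.map StepUD.h).sum

@[simp] theorem hsum_nil : hsum [] = 0 := rfl
@[simp] theorem hsum_cons (s : StepUD) (p : List StepUD) : hsum (s :: p) = s.h + hsum p := by
  simp [hsum]
@[simp] theorem hsum_append (p q : List StepUD) : hsum (p ++ q) = hsum p + hsum q := by
  simp [hsum]

mutual
/-- Bijection tree → Dyck path (young leaves ↦ even peaks). -/
def phi : PlaneTree → List StepUD
  | .node [] => []
  | .node (t :: ts) => .up :: (chi (.node ts) ++ .down :: phi t)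
/-- Companion bijection (youngStar ↦ odd peaks). -/
def chi : PlaneTree → List StepUD
  | .node [] => []
  | .node (t :: ts) => .up :: (phi t ++ .down :: chi (.node ts))
end

theorem phi_chi_length : ∀ T : PlaneTree,
    (phi T).length = 2 * T.edges ∧ (chi T).length = 2 * T.edges := by
  apply PlaneTree.rec'
  · simp [phi, chi]
  · intro t ts ht hts
    rw [PlaneTree.edges_cons]
    constructor
    · rw [phi]; simp [ht.1, hts.2]; ring
    · rw [chi]; simp [ht.1, hts.2]; ring
theorem hsum_eq (p : List StepUD) : (p.map StepUD.h).sum = hsum p := rfl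

@[simp] theorem h_up : StepUD.up.h = 1 := rfl
@[simp] theorem h_down : StepUD.down.h = -1 := rfl

theorem h_cases (s : StepUD) : s.h = 1 ∨ s.h = -1 := by cases s <;> simp

theorem eq_down_of_h (s : StepUD) (h : s.h = -1) : s = .down := by
  cases s <;> simp_all

theorem isDyck_iff_take (p : List StepUD) :
    IsDyck p ↔ hsum p = 0 ∧ ∀ m, 0 ≤ hsum (p.take m) := by
  constructor
  · intro h
    exact ⟨h.1, fun m => h.2 _ (List.take_prefix m p)⟩
  · intro h
    refine ⟨h.1, fun q hq => ?_⟩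
    rw [List.prefix_iff_eq_take.1 hq]
    exact h.2 q.length

theorem hsum_take_succ (l : List StepUD) (m : ℕ) (hm : m < l.length) :
    hsum (l.take (m+1)) = hsum (l.take m) + (l.getD m .up).h := by
  rw [List.take_succ]
  have h1 : l[m]? = some (l.getD m .up) := by
    rw [List.getD_eq_getElem l _ hm, List.getElem?_eq_getElem hm]
  rw [h1]
  simp [hsum]

theorem IsDyck.head_up {s : StepUD} {p : List StepUD} (h : IsDyck (s :: p)) : s = .up := by
  have := h.2 [s] ⟨p, rfl⟩
  cases s
  · rfl
  · simp [StepUD.h] at this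

theorem IsDyck.cons_append {q r : List StepUD} (hq : IsDyck q) (hr : IsDyck r) :
    IsDyck (.up :: (q ++ .down :: r)) := by
  rw [isDyck_iff_take] at *
  constructor
  · simp [hq.1, hr.1]
  · intro m
    cases m with
    | zero => simp
    | succ m =>
      rw [List.take_succ_cons, hsum_cons, List.take_append, hsum_append]
      rcases Nat.lt_or_ge m q.length with hlt | hge
      · have : m - q.length = 0 := by omega
        rw [this]
        have := hq.2 m
        simp
        all_goals omega
      · have h1 : q.take m = q := List.take_of_length_le hge
        obtain ⟨k, hk⟩ : ∃ k, m - q.length = k := ⟨_, rfl⟩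
        rw [hk, h1, hq.1]
        cases k with
        | zero => simp
        | succ k =>
          rw [List.take_succ_cons, hsum_cons]
          have := hr.2 k
          simp
          all_goals omega

theorem exists_decomp (p : List StepUD) (hp : IsDyck p) (hne : p ≠ []) :
    ∃ q r, p = .up :: (q ++ .down :: r) ∧ IsDyck q ∧ IsDyck r ∧
      q.length + r.length + 2 = p.length := by
  obtain ⟨s, t, rfl⟩ : ∃ s t, p = s :: t := by
    cases p with
    | nil => exact absurd rfl hne
    | cons s t => exact ⟨s, t, rfl⟩
  obtain rfl : s = .up := hp.head_up
  have hnn : ∀ m, 0 ≤ hsum ((StepUD.up :: t).take m) :=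
    ((isDyck_iff_take _).1 hp).2
  have hPex : ∃ m, 0 < m ∧ hsum ((StepUD.up :: t).take m) = 0 := by
    refine ⟨t.length + 1, by omega, ?_⟩
    rw [show t.length + 1 = (StepUD.up :: t).length by simp, List.take_length]
    exact hp.1
  classical
  obtain ⟨j, ⟨hj0, hjsum⟩, hjmin⟩ :
      ∃ j, (0 < j ∧ hsum ((StepUD.up :: t).take j) = 0) ∧
        ∀ m, m < j → ¬(0 < m ∧ hsum ((StepUD.up :: t).take m) = 0) :=
    ⟨Nat.find hPex, Nat.find_spec hPex, fun m hm => Nat.find_min hPex hm⟩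
  have hmin : ∀ m, 0 < m → m < j → 1 ≤ hsum ((StepUD.up :: t).take m) := by
    intro m hm0 hmj
    have h1 := hjmin m hmj
    have h2 := hnn m
    simp only [hm0, true_and, not_and] at h1
    omega
  have hjlen : j ≤ t.length + 1 := by
    by_contra hc
    push_neg at hc
    have h0 : hsum ((StepUD.up :: t).take (t.length + 1)) = 0 := by
      rw [show t.length + 1 = (StepUD.up :: t).length by simp, List.take_length]
      exact hp.1
    exact (hjmin (t.length + 1) hc) ⟨by omega, h0⟩
  have hj1 : j ≠ 1 := by
    intro h
    rw [h, List.take_succ_cons, List.take_zero] at hjsum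
    simp at hjsum
  have hj2 : 2 ≤ j := by omega
  obtain ⟨m, rfl⟩ : ∃ m, j = m + 2 := ⟨j - 2, by omega⟩
  have hmt : m < t.length := by simp at hjlen; omega
  have htm1 : hsum (t.take (m+1)) = -1 := by
    rw [List.take_succ_cons, hsum_cons] at hjsum
    simp at hjsum
    omega
  have htm0' : 1 ≤ hsum ((StepUD.up :: t).take (m+1)) := hmin (m+1) (by omega) (by omega)
  have htm0 : 0 ≤ hsum (t.take m) := by
    rw [List.take_succ_cons, hsum_cons] at htm0'
    simp at htm0'
    omega
  have hstep := hsum_take_succ t m hmt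
  have hdown : t.getD m .up = .down := by
    apply eq_down_of_h
    rcases h_cases (t.getD m .up) with h | h
    · omega
    · exact h
  rw [hdown, h_down] at hstep
  have htq0 : hsum (t.take m) = 0 := by omega
  have hqlen : (t.take m).length = m := by rw [List.length_take]; omega
  have hsplit : t = t.take m ++ .down :: t.drop (m+1) := by
    conv_lhs => rw [← List.take_append_drop m t]
    congr 1
    rw [List.drop_eq_getElem_cons hmt]
    congr 1
    rw [← List.getD_eq_getElem t .up hmt]
    exact hdown
  refine ⟨t.take m, t.drop (m+1), by rw [← hsplit], ?_, ?_, ?_⟩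
  · rw [isDyck_iff_take]
    refine ⟨htq0, fun k => ?_⟩
    rw [List.take_take]
    rcases Nat.lt_or_ge k m with h | h
    · have hk1 : min k m = k := by omega
      rw [hk1]
      have h2 := hmin (k+1) (by omega) (by omega)
      rw [List.take_succ_cons, hsum_cons] at h2
      simp at h2
      omega
    · have hk1 : min k m = m := by omega
      rw [hk1, htq0]
  · rw [isDyck_iff_take]
    have hkey : ∀ k, hsum ((StepUD.up :: t).take (m+2+k)) = hsum ((t.drop (m+1)).take k) := by
      intro k
      have heq : (StepUD.up :: t).take (m+2+k)
          = .up :: (t.take m ++ .down :: (t.drop (m+1)).take k) := by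
        rw [show m+2+k = (m+1+k)+1 by ring, List.take_succ_cons]
        congr 1
        conv_lhs => rw [hsplit]
        rw [List.take_append, hqlen,
          List.take_of_length_le (l := t.take m) (by omega),
          show m+1+k-m = k+1 by omega, List.take_succ_cons]
      rw [heq]
      simp [htq0]
    constructor
    · have h1 := hkey (t.length)
      rw [List.take_of_length_le (l := (StepUD.up :: t)) (by simp <;> omega),
        List.take_of_length_le (l := t.drop (m+1)) (by rw [List.length_drop]; omega)] at h1
      rw [← h1]
      exact hp.1
    · intro k
      rw [← hkey k]
      exact hnn _
  · rw [hqlen, List.length_drop]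
    simp
    omega

theorem decomp_unique {q1 r1 q2 r2 : List StepUD} (h1 : IsDyck q1) (h2 : IsDyck q2)
    (he : (.up :: (q1 ++ .down :: r1) : List StepUD) = .up :: (q2 ++ .down :: r2)) :
    q1 = q2 ∧ r1 = r2 := by
  have he' : q1 ++ .down :: r1 = q2 ++ .down :: r2 := by
    exact List.cons_injective he
  rcases List.append_eq_append_iff.1 he' with ⟨a, ha1, ha2⟩ | ⟨a, ha1, ha2⟩
  · cases a with
    | nil =>
      simp at ha1 ha2
      exact ⟨ha1.symm, ha2⟩
    | cons s a =>
      obtain rfl : s = .down := by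
        have := ha2
        simp at this
        exact this.1.symm
      exfalso
      have hpre : (q1 ++ [StepUD.down]) <+: q2 := ⟨a, by rw [ha1]; simp⟩
      have := h2.2 _ hpre
      have hz : hsum q1 = 0 := h1.1
      rw [hsum_eq, hsum_append, hz] at this
      simp [hsum, StepUD.h] at this
  · cases a with
    | nil =>
      simp at ha1 ha2
      exact ⟨ha1, ha2.symm⟩
    | cons s a =>
      obtain rfl : s = .down := by
        have := ha2
        simp at this
        exact this.1.symm
      exfalso
      have hpre : (q2 ++ [StepUD.down]) <+: q1 := ⟨a, by rw [ha1]; simp⟩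
      have := h1.2 _ hpre
      have hz : hsum q2 = 0 := h2.1
      rw [hsum_eq, hsum_append, hz] at this
      simp [hsum, StepUD.h] at this
/-- Peaks whose height has remainder `c` mod 2. -/
def peaksMod (c : ℤ) (p : List StepUD) : ℕ :=
  ((Finset.range p.length).filter (fun i =>
    p.getD i .down = .up ∧ p.getD (i + 1) .up = .down ∧
      ((p.take (i + 1)).map StepUD.h).sum % 2 = c)).card

theorem evenPeaks_eq (p : List StepUD) : evenPeaks p = peaksMod 0 p := rfl

theorem peaksMod_eq_sum (c : ℤ) (p : List StepUD) :
    peaksMod c p = ∑ i ∈ Finset.range p.length, (if p.getD i .down = .up ∧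
      p.getD (i + 1) .up = .down ∧ hsum (p.take (i + 1)) % 2 = c then 1 else 0) := by
  rw [peaksMod, Finset.card_filter]
  rfl

theorem sum_range_add' (f : ℕ → ℕ) (m n : ℕ) :
    ∑ i ∈ Finset.range (m + n), f i
      = ∑ i ∈ Finset.range m, f i + ∑ i ∈ Finset.range n, f (m + i) := by
  induction n with
  | zero => simp
  | succ n ih =>
    rw [show m + (n+1) = (m+n)+1 by ring, Finset.sum_range_succ, ih,
      Finset.sum_range_succ]
    omega

theorem peaksMod_append (c : ℤ) (s r : List StepUD) (hlast : ∃ s', s = s' ++ [.down])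
    (hs0 : hsum s % 2 = 0) :
    peaksMod c (s ++ r) = peaksMod c s + peaksMod c r := by
  obtain ⟨s', rfl⟩ := hlast
  set s : List StepUD := s' ++ [.down] with hsdef
  have hslen : s.length = s'.length + 1 := by simp [hsdef]
  rw [peaksMod_eq_sum, peaksMod_eq_sum, peaksMod_eq_sum, List.length_append,
    sum_range_add']
  congr 1
  · apply Finset.sum_congr rfl
    intro i hi
    rw [Finset.mem_range] at hi
    have h1 : (s ++ r).getD i .down = s.getD i .down := List.getD_append _ _ _ _ hi
    have h3 : (s ++ r).take (i+1) = s.take (i+1) := by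
      rw [List.take_append, show i + 1 - s.length = 0 by omega]
      simp
    rcases Nat.lt_or_ge (i+1) s.length with h | h
    · have h2 : (s ++ r).getD (i+1) .up = s.getD (i+1) .up := List.getD_append _ _ _ _ h
      rw [h1, h2, h3]
    · have hi' : i = s'.length := by omega
      have hfirst : s.getD i .down = .down := by
        rw [hsdef, hi', List.getD_append_right _ _ _ _ (le_refl _)]
        simp
      rw [if_neg, if_neg]
      · rw [hfirst]; simp
      · rw [h1, hfirst]; simp
  · apply Finset.sum_congr rfl
    intro j hj
    rw [Finset.mem_range] at hj
    have h1 : (s ++ r).getD (s.length + j) .down = r.getD j .down := by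
      rw [List.getD_append_right _ _ _ _ (by omega)]
      congr 1
      omega
    have h2 : (s ++ r).getD (s.length + j + 1) .up = r.getD (j + 1) .up := by
      rw [List.getD_append_right _ _ _ _ (by omega)]
      congr 1
      omega
    have h3 : (s ++ r).take (s.length + j + 1) = s ++ r.take (j + 1) := by
      rw [List.take_append, List.take_of_length_le (by omega),
        show s.length + j + 1 - s.length = j + 1 by omega]
    rw [h1, h2, h3, hsum_append]
    congr 1
    apply propext
    constructor
    · rintro ⟨a, b, hc3⟩
      exact ⟨a, b, by omega⟩
    · rintro ⟨a, b, hc3⟩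
      exact ⟨a, b, by omega⟩
theorem IsDyck.last_down {p : List StepUD} (hp : IsDyck p) (hne : p ≠ []) :
    ∃ s', p = s' ++ [.down] := by
  obtain ⟨s', s, rfl⟩ : ∃ s' s, p = s' ++ [s] :=
    ⟨p.dropLast, p.getLast hne, (p.dropLast_append_getLast hne).symm⟩
  cases s with
  | down => exact ⟨s', rfl⟩
  | up =>
    exfalso
    have h0 : hsum (s' ++ [StepUD.up]) = 0 := hp.1
    have hpre := hp.2 s' ⟨[.up], rfl⟩
    rw [hsum_eq] at hpre
    rw [hsum_append, show hsum [StepUD.up] = 1 from rfl] at h0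
    omega

theorem peaksMod_UqD (c c' : ℤ) (hc : ∀ x : ℤ, (1 + x) % 2 = c ↔ x % 2 = c')
    (q : List StepUD) (hq : IsDyck q) :
    peaksMod c (.up :: (q ++ [.down]))
      = peaksMod c' q + (if q = [] ∧ c = 1 then 1 else 0) := by
  rcases eq_or_ne q [] with rfl | hne
  · have hval : peaksMod c ([.up, .down] : List StepUD) = if c = 1 then 1 else 0 := by
      rw [peaksMod_eq_sum]
      show (∑ i ∈ Finset.range 2, _) = _
      rw [Finset.sum_range_succ, Finset.sum_range_succ, Finset.sum_range_zero]
      have h4 : ¬ (([StepUD.up, .down] : List StepUD).getD 1 .down = .up ∧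
          ([StepUD.up, .down] : List StepUD).getD (1+1) .up = .down ∧
          hsum (([StepUD.up, .down] : List StepUD).take (1+1)) % 2 = c) := by
        rintro ⟨h, -, -⟩
        simp [List.getD] at h
      rw [if_neg h4, add_zero]
      rcases eq_or_ne c 1 with rfl | h
      · rw [if_pos ⟨rfl, rfl, by norm_num [hsum, StepUD.h]⟩, if_pos rfl]
      · rw [if_neg, if_neg (by omega)]
        rintro ⟨-, -, hx⟩
        have : hsum (([StepUD.up, .down] : List StepUD).take (0+1)) = 1 := by
          norm_num [hsum, StepUD.h]
        omega
    have h0 : peaksMod c' ([] : List StepUD) = 0 := by rw [peaksMod_eq_sum]; simp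
    simpa [h0] using hval
  · -- q nonempty: starts with up, ends with down
    obtain ⟨u, t, rfl⟩ : ∃ u t, q = u :: t := by
      cases q with
      | nil => exact absurd rfl hne
      | cons u t => exact ⟨u, t, rfl⟩
    obtain rfl : u = .up := hq.head_up
    set q : List StepUD := .up :: t with hqdef
    have hlastd : q.getD (q.length - 1) .down = .down := by
      obtain ⟨s', hs'⟩ := hq.last_down (by simp [hqdef])
      have hl : q.length - 1 = s'.length := by rw [hs']; simp
      rw [hl, hs', List.getD_append_right _ _ _ _ le_rfl]
      simp
    rw [if_neg (by simp [hqdef])]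
    rw [peaksMod_eq_sum, peaksMod_eq_sum]
    have hlen : (StepUD.up :: (q ++ [StepUD.down])).length = q.length + 2 := by simp
    rw [hlen, show q.length + 2 = (q.length + 1) + 1 by rfl, Finset.sum_range_succ',
      Finset.sum_range_succ]
    have hzero : (if (StepUD.up :: (q ++ [StepUD.down])).getD 0 .down = .up ∧
        (StepUD.up :: (q ++ [StepUD.down])).getD 1 .up = .down ∧
        hsum ((StepUD.up :: (q ++ [StepUD.down])).take 1) % 2 = c then 1 else 0) = 0 := by
      rw [if_neg]
      rintro ⟨-, h2, -⟩
      rw [List.getD_cons_succ, List.getD_append _ _ _ _ (by simp [hqdef])] at h2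
      rw [hqdef] at h2
      simp at h2
    have htop : (if (StepUD.up :: (q ++ [StepUD.down])).getD (q.length + 1) .down = .up ∧
        (StepUD.up :: (q ++ [StepUD.down])).getD (q.length + 1 + 1) .up = .down ∧
        hsum ((StepUD.up :: (q ++ [StepUD.down])).take (q.length + 1 + 1)) % 2 = c
        then 1 else 0) = 0 := by
      rw [if_neg]
      rintro ⟨h1, -, -⟩
      rw [List.getD_cons_succ, List.getD_append_right _ _ _ _ (by omega)] at h1
      simp at h1
    rw [hzero, htop]
    simp only [add_zero]
    apply Finset.sum_congr rfl
    intro i hi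
    rw [Finset.mem_range] at hi
    have h1 : (StepUD.up :: (q ++ [StepUD.down])).getD (i + 1) .down = q.getD i .down := by
      rw [List.getD_cons_succ, List.getD_append _ _ _ _ hi]
    have h3 : (StepUD.up :: (q ++ [StepUD.down])).take (i + 1 + 1)
        = .up :: q.take (i + 1) := by
      rw [List.take_succ_cons]
      congr 1
      rw [List.take_append, show i + 1 - q.length = 0 by omega]
      simp
    rcases Nat.lt_or_ge (i + 1) q.length with h | h
    · have h2 : (StepUD.up :: (q ++ [StepUD.down])).getD (i + 1 + 1) .up
          = q.getD (i + 1) .up := by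
        rw [List.getD_cons_succ, List.getD_append _ _ _ _ h]
      rw [h1, h2, h3, hsum_cons, h_up]
      congr 1
      apply propext
      exact and_congr Iff.rfl (and_congr Iff.rfl (hc _))
    · have hi' : i = q.length - 1 := by omega
      rw [if_neg, if_neg]
      · rintro ⟨ha, -, -⟩
        rw [hi', hlastd] at ha
        simp at ha
      · rintro ⟨ha, -, -⟩
        rw [h1, hi', hlastd] at ha
        simp at ha

theorem peaksMod_decomp (c c' : ℤ) (hc : ∀ x : ℤ, (1 + x) % 2 = c ↔ x % 2 = c')
    (q r : List StepUD) (hq : IsDyck q) :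
    peaksMod c (.up :: (q ++ .down :: r))
      = peaksMod c' q + (if q = [] ∧ c = 1 then 1 else 0) + peaksMod c r := by
  have hsplit : (StepUD.up :: (q ++ .down :: r) : List StepUD)
      = (.up :: (q ++ [.down])) ++ r := by simp
  rw [hsplit, peaksMod_append c _ r ⟨.up :: q, by simp⟩, peaksMod_UqD c c' hc q hq]
  have hz : hsum q = 0 := hq.1
  simp [hz, StepUD.h]
@[simp] theorem phi_nil : phi (.node []) = [] := by rw [phi]
@[simp] theorem chi_nil : chi (.node []) = [] := by rw [chi]

theorem phi_eq_nil_iff : ∀ T : PlaneTree, phi T = [] ↔ T = .node [] := by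
  intro T
  cases T with
  | node ts =>
    cases ts with
    | nil => simp [phi]
    | cons t ts => rw [phi]; simp

theorem phi_chi_spec : ∀ T : PlaneTree, IsDyck (phi T) ∧ IsDyck (chi T) ∧
    peaksMod 0 (phi T) = T.youngLeaves ∧ peaksMod 1 (chi T) = T.youngStar := by
  have hc0 : ∀ x : ℤ, (1 + x) % 2 = 0 ↔ x % 2 = 1 := by omega
  have hc1 : ∀ x : ℤ, (1 + x) % 2 = 1 ↔ x % 2 = 0 := by omega
  have hnil : IsDyck ([] : List StepUD) := ⟨rfl, by rintro q ⟨u, hu⟩; simp_all⟩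
  have hpnil : peaksMod 0 ([] : List StepUD) = 0 := by rw [peaksMod_eq_sum]; simp
  have hcnil : peaksMod 1 ([] : List StepUD) = 0 := by rw [peaksMod_eq_sum]; simp
  apply PlaneTree.rec'
  · exact ⟨by simpa [phi] using hnil, by simpa [chi] using hnil, by simp [phi, hpnil],
      by simp [chi, hcnil]⟩
  · intro t ts ht hts
    obtain ⟨htd, htc, htp, hts'⟩ := ht
    obtain ⟨htsd, htsc, htsp, htss⟩ := hts
    have hphi : phi (.node (t :: ts)) = .up :: (chi (.node ts) ++ .down :: phi t) := by
      rw [phi]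
    have hchi : chi (.node (t :: ts)) = .up :: (phi t ++ .down :: chi (.node ts)) := by
      rw [chi]
    have hleaf : (if phi t = [] ∧ (1 : ℤ) = 1 then 1 else 0) = t.isLeafInd := by
      cases t with
      | node cs =>
        cases cs with
        | nil => simp [phi_eq_nil_iff, PlaneTree.isLeafInd]
        | cons c cs =>
          rw [if_neg]
          · simp [PlaneTree.isLeafInd]
          · rintro ⟨h, -⟩
            rw [phi_eq_nil_iff] at h
            simp at h
    refine ⟨?_, ?_, ?_, ?_⟩
    · rw [hphi]; exact htsc.cons_append htd
    · rw [hchi]; exact htd.cons_append htsc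
    · rw [hphi, peaksMod_decomp 0 1 hc0 _ _ htsc, htss, htp, PlaneTree.young_cons]
      simp
      all_goals omega
    · rw [hchi, peaksMod_decomp 1 0 hc1 _ _ htd, htp, htss, PlaneTree.youngStar_cons,
        hleaf]
      omega

theorem phi_chi_inj : ∀ T T' : PlaneTree,
    (phi T = phi T' → T = T') ∧ (chi T = chi T' → T = T') := by
  apply PlaneTree.rec' (P := fun T => ∀ T' : PlaneTree,
    (phi T = phi T' → T = T') ∧ (chi T = chi T' → T = T'))
  · intro T'
    constructor
    · intro h
      rw [phi_nil] at h
      exact ((phi_eq_nil_iff T').1 h.symm).symm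
    · intro h
      rw [chi_nil] at h
      cases T' with
      | node ts =>
        cases ts with
        | nil => rfl
        | cons t ts => rw [chi] at h; simp at h
  · intro t ts iht ihts T'
    cases T' with
    | node ts' =>
      cases ts' with
      | nil =>
        constructor
        · intro h; rw [phi, phi] at h; simp at h
        · intro h; rw [chi, chi] at h; simp at h
      | cons t' ts' =>
        constructor
        · intro h
          rw [phi, phi] at h
          obtain ⟨h1, h2⟩ := decomp_unique (phi_chi_spec (.node ts)).2.1
            (phi_chi_spec (.node ts')).2.1 h
          have e1 := (ihts (.node ts')).2 h1
          have e2 := (iht t').1 h2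
          simp at e1
          rw [e1, e2]
        · intro h
          rw [chi, chi] at h
          obtain ⟨h1, h2⟩ := decomp_unique (phi_chi_spec t).1
            (phi_chi_spec t').1 h
          have e1 := (iht t').1 h1
          have e2 := (ihts (.node ts')).2 h2
          simp at e2
          rw [e1, e2]

theorem phi_chi_surj : ∀ N : ℕ, ∀ p : List StepUD, p.length ≤ N → IsDyck p →
    (∃ T, phi T = p) ∧ (∃ T, chi T = p) := by
  intro N
  induction N with
  | zero =>
    intro p hlen _
    obtain rfl : p = [] := List.length_eq_zero_iff.1 (by omega)
    exact ⟨⟨.node [], phi_nil⟩, ⟨.node [], chi_nil⟩⟩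
  | succ N ih =>
    intro p hlen hp
    rcases eq_or_ne p [] with rfl | hne
    · exact ⟨⟨.node [], phi_nil⟩, ⟨.node [], chi_nil⟩⟩
    · obtain ⟨q, r, rfl, hq, hr, hlen2⟩ := exists_decomp p hp hne
      rw [← hlen2] at hlen
      obtain ⟨⟨Tqp, hTqp⟩, ⟨Tqc, hTqc⟩⟩ := ih q (by omega) hq
      obtain ⟨⟨Trp, hTrp⟩, ⟨Trc, hTrc⟩⟩ := ih r (by omega) hr
      constructor
      · cases Tqc with
        | node ts => exact ⟨.node (Trp :: ts), by rw [phi, hTqc, hTrp]⟩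
      · cases Trc with
        | node ts => exact ⟨.node (Tqp :: ts), by rw [chi, hTqp, hTrc]⟩
/-- The number of plane trees with `n` edges and `k` young leaves equals the number of
Dyck paths of length `2n` with exactly `k` peaks at even height. -/
theorem card_young_eq_card_evenPeaks (n k : ℕ) (hn : 1 ≤ n) :
    Nat.card {T : PlaneTree // T.edges = n ∧ T.youngLeaves = k} =
      Nat.card {p : List StepUD // p.length = 2 * n ∧ IsDyck p ∧ evenPeaks p = k} := by
  apply Nat.card_congr
  refine Equiv.ofBijective (fun x => ⟨phi x.1, ?_, ?_, ?_⟩) ⟨?_, ?_⟩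
  · rw [(phi_chi_length x.1).1, x.2.1]
  · exact (phi_chi_spec x.1).1
  · rw [evenPeaks_eq, (phi_chi_spec x.1).2.2.1, x.2.2]
  · intro a b h
    apply Subtype.ext
    exact (phi_chi_inj a.1 b.1).1 (congrArg Subtype.val h)
  · rintro ⟨p, hp1, hp2, hp3⟩
    obtain ⟨T, hT⟩ := (phi_chi_surj p.length p le_rfl hp2).1
    have hlen := (phi_chi_length T).1
    rw [hT, hp1] at hlen
    refine ⟨⟨T, by omega, ?_⟩, Subtype.ext hT⟩
    rw [← (phi_chi_spec T).2.2.1, ← evenPeaks_eq, hT, hp3]
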